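/- In the conflict graph on binary strings, two instances are in conflict if and only if they are linked by a monotone path: a sequence of instances of consecutive increasing sizes each pair of which is in conflict. -/

import Mathlib

/-- `r` is the (0-indexed) position of the last `0` (= `false`) of the string `s`. -/
def LastZeroAt (s : List Bool) (r : ℕ) : Prop :=
  s[r]? = some false ∧ ∀ j, r < j → j < s.length → s[j]? = some true

/-- Instances `s` and `t` (binary strings, each containing a `0`) are in conflict:
`t` is strictly longer, has the same number of `1`s, and agrees with `s` on all
positions up to (and including) the last `0` of `s`. -/
def Conflict (s t : List Bool) : Prop :=
  s.length < t.length ∧ s.count true = t.count true ∧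
    ∃ r, LastZeroAt s r ∧ s.take (r + 1) = t.take (r + 1)

private lemma count_false_add_count_true (l : List Bool) :
    l.count false + l.count true = l.length := by
  induction l with
  | nil => simp
  | cons a l ih => cases a <;> simp [List.count_cons] <;> omega

private lemma get?_replicate_lt {a : Bool} {m i : ℕ} (h : i < m) :
    (List.replicate m a)[i]? = some a := by
  rw [List.getElem?_replicate, if_pos h]

/-- If all entries after position `r` are `true`, the drop is a replicate. -/
private lemma drop_eq_replicate_true (s : List Bool) (r : ℕ)
    (h : ∀ j, r < j → j < s.length → s[j]? = some true) :
    s.drop (r + 1) = List.replicate (s.length - (r + 1)) true := by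
  apply List.ext_getElem?
  intro n
  rw [List.getElem?_drop]
  by_cases hn : n < s.length - (r + 1)
  · rw [get?_replicate_lt hn, h _ (by omega) (by omega)]
  · rw [List.getElem?_eq_none (by omega : s.length ≤ r + 1 + n), eq_comm,
      List.getElem?_eq_none (by rw [List.length_replicate]; omega)]

private lemma count_true_of_lastZero {s : List Bool} {r : ℕ}
    (h : ∀ j, r < j → j < s.length → s[j]? = some true) :
    s.count true = (s.take (r + 1)).count true + (s.length - (r + 1)) := by
  conv_lhs => rw [← List.take_append_drop (r + 1) s]
  rw [List.count_append, drop_eq_replicate_true s r h, List.count_replicate_self]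

private lemma conflict_trans {s u t : List Bool} (h1 : Conflict s u) (h2 : Conflict u t) :
    Conflict s t := by
  obtain ⟨hl1, hc1, r, hr, hp1⟩ := h1
  obtain ⟨hl2, hc2, r', hr', hp2⟩ := h2
  refine ⟨hl1.trans hl2, hc1.trans hc2, r, hr, ?_⟩
  have hrlen : r < s.length := List.getElem?_eq_some_iff.1 hr.1 |>.1
  have hur : u[r]? = some false := by
    have h1 : (s.take (r + 1))[r]? = (u.take (r + 1))[r]? := by rw [hp1]
    rwa [List.getElem?_take_of_lt (by omega), List.getElem?_take_of_lt (by omega), hr.1, eq_comm] at h1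
  have hrr' : r ≤ r' := by
    by_contra hlt
    push_neg at hlt
    have := hr'.2 r hlt (by omega)
    rw [hur] at this
    simp at this
  calc s.take (r + 1) = u.take (r + 1) := hp1
    _ = (u.take (r' + 1)).take (r + 1) := by rw [List.take_take, min_eq_left (by omega)]
    _ = (t.take (r' + 1)).take (r + 1) := by rw [hp2]
    _ = t.take (r + 1) := by rw [List.take_take, min_eq_left (by omega)]

private lemma conflict_split {s t : List Bool} (h : Conflict s t)
    (h2 : s.length + 1 < t.length) :
    ∃ u, u.length = s.length + 1 ∧ Conflict s u ∧ Conflict u t := by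
  obtain ⟨hlen, hcnt, r, ⟨hr0, hrT⟩, hpre⟩ := h
  set n := s.length with hn
  have hrn : r < n := List.getElem?_eq_some_iff.1 hr0 |>.1
  -- count of s
  have hsc : s.count true = (s.take (r + 1)).count true + (n - (r + 1)) :=
    count_true_of_lastZero hrT
  set d := t.drop (r + 1) with hd
  have hdlen : d.length = t.length - (r + 1) := by simp [hd]
  have htc : t.count true = (t.take (r + 1)).count true + d.count true := by
    conv_lhs => rw [← List.take_append_drop (r + 1) t]
    rw [List.count_append]
  have hctake : (s.take (r + 1)).count true = (t.take (r + 1)).count true := by rw [hpre]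
  have hdct : d.count true = n - (r + 1) := by omega
  have hdsum : d.count false + d.count true = d.length := count_false_add_count_true d
  have hdcf : d.count false = t.length - n := by omega
  have hmem : false ∈ d := by
    rw [← List.count_pos_iff]
    omega
  set k := d.idxOf false with hk
  have hkd : k < d.length := List.idxOf_lt_length_iff.2 hmem
  have hkget : d[k]? = some false := List.getElem?_eq_some_iff.2 ⟨hkd, List.getElem_idxOf hkd⟩
  -- the prefix of d of length k is all true
  have hnotmem : false ∉ d.take k := by
    intro hmem'
    obtain ⟨i, hi, hget⟩ := List.getElem_of_mem hmem'
    rw [List.getElem_take] at hget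
    have hik : i < k := by simp at hi; omega
    have := List.not_of_lt_findIdx (p := (· == false)) (xs := d) (i := i) hik
    rw [hget] at this
    simp at this
  have hcf0 : (d.take k).count false = 0 := List.count_eq_zero.2 hnotmem
  have hkget' : d[k]? = some false := hkget
  have htk1 : d.take (k + 1) = d.take k ++ [false] := by
    rw [List.take_succ, hkget']
    rfl
  have hcf1 : (d.take (k + 1)).count false = 1 := by
    rw [htk1, List.count_append, hcf0]
    simp
  have hsumtk : (d.take (k + 1)).count false + (d.take (k + 1)).count true
      = (d.take (k + 1)).length := count_false_add_count_true _
  have hlentk : (d.take (k + 1)).length = k + 1 := by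
    rw [List.length_take]
    omega
  have hct_tk : (d.take (k + 1)).count true = k := by omega
  -- z ≤ n
  have hdsplit : d.count false = (d.take (k + 1)).count false + (d.drop (k + 1)).count false := by
    conv_lhs => rw [← List.take_append_drop (k + 1) d]
    rw [List.count_append]
  have hcle : (d.drop (k + 1)).count false ≤ d.length - (k + 1) := by
    calc (d.drop (k + 1)).count false ≤ (d.drop (k + 1)).length := List.count_le_length
      _ = d.length - (k + 1) := by simp
  set z := r + 1 + k with hz
  have hzn : z ≤ n := by omega
  -- the intermediate string
  set u := t.take (z + 1) ++ List.replicate (n - z) true with hu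
  have hlt1 : (t.take (z + 1)).length = z + 1 := by
    rw [List.length_take]
    omega
  have hulen : u.length = n + 1 := by
    rw [hu, List.length_append, hlt1, List.length_replicate]
    omega
  -- t.take (z+1) decomposition
  have htz : t.take (z + 1) = t.take (r + 1) ++ d.take (k + 1) := by
    rw [show z + 1 = (r + 1) + (k + 1) from by omega, List.take_add, ← hd]
  have huct : u.count true = s.count true := by
    rw [hu, List.count_append, htz, List.count_append, List.count_replicate_self,
      hct_tk, hsc, hctake]
    omega
  have hpre_u : s.take (r + 1) = u.take (r + 1) := by
    rw [hu, List.take_append, hlt1,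
      show r + 1 - (z + 1) = 0 from by omega, List.take_zero, List.append_nil,
      List.take_take, min_eq_left (by omega), hpre]
  have hsu : Conflict s u := ⟨by omega, huct.symm, r, ⟨hr0, hrT⟩, hpre_u⟩
  have hutake : u.take (z + 1) = t.take (z + 1) := by
    rw [hu, List.take_append, hlt1, Nat.sub_self, List.take_zero,
      List.append_nil, List.take_take, min_self]
  have hugetz : u[z]? = some false := by
    rw [hu, List.getElem?_append_left (by omega), List.getElem?_take_of_lt (by omega)]
    rw [hd, List.getElem?_drop] at hkget
    exact hkget
  have hugetj : ∀ j, z < j → j < u.length → u[j]? = some true := by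
    intro j hj1 hj2
    rw [hulen] at hj2
    rw [hu, List.getElem?_append_right (by omega), hlt1]
    exact get?_replicate_lt (by omega)
  have hut : Conflict u t :=
    ⟨by omega, by rw [huct, hcnt], z, ⟨hugetz, hugetj⟩, hutake⟩
  exact ⟨u, hulen, hsu, hut⟩

private lemma path_of_conflict : ∀ (q : ℕ) (s t : List Bool), Conflict s t →
    t.length = s.length + q + 1 →
    ∃ J : ℕ → List Bool, J 0 = s ∧ J (q + 1) = t ∧
      (∀ i ≤ q + 1, (J i).length = s.length + i) ∧
      (∀ i, i < q + 1 → Conflict (J i) (J (i + 1))) := by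
  intro q
  induction q with
  | zero =>
    intro s t hst hlen
    refine ⟨fun i => if i = 0 then s else t, rfl, rfl, ?_, ?_⟩
    · intro i hi
      interval_cases i <;> simp [hlen]
    · intro i hi
      interval_cases i
      simpa using hst
  | succ q ih =>
    intro s t hst hlen
    obtain ⟨u, hul, hsu, hut⟩ := conflict_split hst (by omega)
    obtain ⟨J', h0, hq, hL, hC⟩ := ih u t hut (by omega)
    refine ⟨fun i => if i = 0 then s else J' (i - 1), rfl, ?_, ?_, ?_⟩
    · simpa using hq
    · intro i hi
      cases i with
      | zero => simp
      | succ i =>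
        simp only [Nat.succ_ne_zero, if_false, Nat.succ_sub_one]
        rw [hL i (by omega), hul]
        omega
    · intro i hi
      cases i with
      | zero => simpa [h0] using hsu
      | succ i =>
        simp only [Nat.succ_ne_zero, if_false, Nat.succ_sub_one]
        exact hC i (by omega)

/-- Two instances are in conflict iff they are linked by a monotone path in the
conflict graph: a sequence of instances of consecutive increasing sizes, each
consecutive pair of which is in conflict. -/
theorem conflict_iff_monotone_path (s t : List Bool) (hs : false ∈ s) (ht : false ∈ t)
    (hlen : s.length < t.length) :
    Conflict s t ↔
      ∃ J : ℕ → List Bool, J 0 = s ∧ J (t.length - s.length) = t ∧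
        (∀ i ≤ t.length - s.length, (J i).length = s.length + i) ∧
        (∀ i, i < t.length - s.length → Conflict (J i) (J (i + 1))) := by
  constructor
  · intro h
    obtain ⟨J, h0, hq, hL, hC⟩ :=
      path_of_conflict (t.length - s.length - 1) s t h (by omega)
    have hq' : t.length - s.length - 1 + 1 = t.length - s.length := by omega
    rw [hq'] at hq hL hC
    exact ⟨J, h0, hq, hL, hC⟩
  · rintro ⟨J, h0, hq, hL, hC⟩
    have key : ∀ k, k < t.length - s.length → Conflict (J 0) (J (k + 1)) := by
      intro k
      induction k with
      | zero => intro hk; exact hC 0 hk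
      | succ k ihk =>
        intro hk
        exact conflict_trans (ihk (by omega)) (hC (k + 1) hk)
    have h := key (t.length - s.length - 1) (by omega)
    rw [h0, show t.length - s.length - 1 + 1 = t.length - s.length from by omega, hq] at h
    exact h
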